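/- If E ⊆ X × Y has VC dimension at most d and Y' ⊆ Y, X' ⊆ X, then the family {E_x \ E_{x'} : x,x' ∈ X} restricted to Y has VC dimension bounded by a constant multiple of d; consequently, by the ε-net theorem, for each r ≥ 2 there is a set Ŷ ⊆ Y of size O(d·r·log r) such that any x, x' with E_x ∩ Ŷ = E_{x'} ∩ Ŷ satisfy μ(E_x △ E_{x'}) ≤ 1/r. -/

import Mathlib

open Finset
set_option maxHeartbeats 1000000

/-- The binomial tail bound `∑_{k ≤ d} C(n,k) ≤ (e n / d)^d` for `1 ≤ d ≤ n`. -/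
lemma sum_choose_le_pow (d n : ℕ) (hd : 1 ≤ d) (hdn : d ≤ n) :
    ((∑ k ∈ Iic d, n.choose k : ℕ) : ℝ) ≤ (Real.exp 1 * n / d) ^ d := by
  have hn : 0 < (n : ℝ) := by exact_mod_cast Nat.lt_of_lt_of_le (Nat.lt_of_lt_of_le Nat.zero_lt_one hd) hdn
  have hd' : 0 < (d : ℝ) := by positivity
  set x : ℝ := d / n with hx
  have hx0 : 0 < x := by positivity
  have hx1 : x ≤ 1 := by
    rw [hx, div_le_one hn]; exact_mod_cast hdn
  have key : ((∑ k ∈ Iic d, n.choose k : ℕ) : ℝ) * x ^ d ≤ Real.exp 1 ^ d := by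
    have h1 : ((∑ k ∈ Iic d, n.choose k : ℕ) : ℝ) * x ^ d
        ≤ ∑ k ∈ Iic d, (n.choose k : ℝ) * x ^ k := by
      push_cast
      rw [sum_mul]
      refine Finset.sum_le_sum fun k hk => ?_
      have : x ^ d ≤ x ^ k :=
        pow_le_pow_of_le_one hx0.le hx1 (mem_Iic.1 hk)
      have : (n.choose k : ℝ) * x ^ d ≤ (n.choose k : ℝ) * x ^ k := by
        apply mul_le_mul_of_nonneg_left this (by positivity)
      linarith
    have h2 : ∑ k ∈ Iic d, (n.choose k : ℝ) * x ^ k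
        ≤ ∑ k ∈ range (n + 1), (n.choose k : ℝ) * x ^ k := by
      apply Finset.sum_le_sum_of_subset_of_nonneg
      · intro k hk
        simp only [mem_Iic, mem_range] at *
        omega
      · intro k _ _; positivity
    have h3 : ∑ k ∈ range (n + 1), (n.choose k : ℝ) * x ^ k = (x + 1) ^ n := by
      rw [add_pow]
      refine Finset.sum_congr rfl fun k hk => ?_
      rw [one_pow]
      ring
    have h4 : (x + 1) ^ n ≤ Real.exp 1 ^ d := by
      have h5 : (x + 1) ^ n ≤ Real.exp x ^ n := by
        apply pow_le_pow_left₀ (by positivity)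
        linarith [Real.add_one_le_exp x]
      refine h5.trans ?_
      rw [← Real.exp_nat_mul, ← Real.exp_nat_mul]
      apply Real.exp_le_exp.2
      rw [hx, mul_one]
      rw [mul_div_cancel₀ _ hn.ne']
    calc _ ≤ _ := h1
      _ ≤ _ := h2
      _ = _ := h3
      _ ≤ _ := h4
  have hxd : 0 < x ^ d := by positivity
  rw [← mul_le_mul_iff_of_pos_right hxd]
  calc ((∑ k ∈ Iic d, n.choose k : ℕ) : ℝ) * x ^ d ≤ Real.exp 1 ^ d := key
    _ = (Real.exp 1 * n / d) ^ d * x ^ d := by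
        rw [← mul_pow]
        congr 1
        rw [hx]
        field_simp

/-- Sauer–Shelah trace bound: if every set shattered by `𝒜` has size `≤ d`, then the
number of distinct traces of `𝒜` on a set `W` is at most `∑_{k ≤ d} C(|W|, k)`. -/
lemma trace_card_le {α : Type*} [DecidableEq α] (𝒜 : Finset (Finset α)) (d : ℕ)
    (h : ∀ s : Finset α, 𝒜.Shatters s → s.card ≤ d) (W : Finset α) :
    (𝒜.image (· ∩ W)).card ≤ ∑ k ∈ Iic d, W.card.choose k := by
  set ℬ := 𝒜.image (· ∩ W) with hB
  have h1 : ℬ.card ≤ ℬ.shatterer.card := Finset.card_le_card_shatterer ℬ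
  have h2 : ℬ.shatterer ⊆ (Iic d).biUnion (fun k => W.powersetCard k) := by
    intro s hs
    rw [mem_shatterer] at hs
    have hsW : s ⊆ W := by
      obtain ⟨t, ht, hst⟩ := hs.exists_superset
      rw [hB] at ht
      obtain ⟨u, _, rfl⟩ := mem_image.1 ht
      exact hst.trans inter_subset_right
    have hsA : 𝒜.Shatters s := by
      intro t ht
      obtain ⟨v, hv, hsv⟩ := hs ht
      rw [hB] at hv
      obtain ⟨u, hu, rfl⟩ := mem_image.1 hv
      refine ⟨u, hu, ?_⟩
      rw [← hsv, ← inter_assoc, inter_comm s u, inter_assoc, inter_eq_left.2 hsW,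
        inter_comm]
    rw [mem_biUnion]
    exact ⟨s.card, mem_Iic.2 (h s hsA), mem_powersetCard.2 ⟨hsW, rfl⟩⟩
  calc ℬ.card ≤ ℬ.shatterer.card := h1
    _ ≤ ((Iic d).biUnion (fun k => W.powersetCard k)).card := card_le_card h2
    _ ≤ ∑ k ∈ Iic d, (W.powersetCard k).card := card_biUnion_le
    _ = ∑ k ∈ Iic d, W.card.choose k := by
        refine Finset.sum_congr rfl fun k _ => ?_
        rw [card_powersetCard]

lemma vc_numeric (d m : ℕ) (hd : 1 ≤ d) (hdm : d < m)
    (h : (2:ℝ)^m ≤ (Real.exp 1 * m / d)^(2*d)) : m ≤ 64*d := by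
  by_contra hc
  push_neg at hc
  have hd0 : (0:ℝ) < d := by exact_mod_cast hd
  have hm0' : 0 < m := by omega
  have hm0 : (0:ℝ) < m := by exact_mod_cast hm0'
  set t : ℝ := m / d with ht
  have ht0 : 0 < t := by positivity
  have ht64 : 64 ≤ t := by
    rw [ht, le_div_iff₀ hd0]
    exact_mod_cast Nat.le_of_lt hc
  have hbase : 0 < Real.exp 1 * m / d := by positivity
  have hlog : (m:ℝ) * Real.log 2 ≤ (2*d : ℕ) * Real.log (Real.exp 1 * m / d) := by
    have := Real.log_le_log (by positivity) h
    rwa [Real.log_pow, Real.log_pow] at this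
  have harg : Real.exp 1 * m / d = Real.exp 1 * t := by
    rw [ht]; ring
  have hlogarg : Real.log (Real.exp 1 * m / d) = 1 + Real.log t := by
    rw [harg, Real.log_mul (Real.exp_pos 1).ne' ht0.ne', Real.log_exp]
  set u : ℝ := Real.sqrt t with hu
  have hu2 : u ^ 2 = t := Real.sq_sqrt ht0.le
  have hu8 : 8 ≤ u := by
    rw [hu]
    have : (8:ℝ) = Real.sqrt 64 := by
      rw [show (64:ℝ) = 8^2 by norm_num, Real.sqrt_sq (by norm_num)]
    rw [this]
    exact Real.sqrt_le_sqrt ht64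
  have hlogt : Real.log t ≤ 2 * (u - 1) := by
    have h1 : Real.log u ≤ u - 1 := Real.log_le_sub_one_of_pos (by linarith)
    have h2 : Real.log u = Real.log t / 2 := Real.log_sqrt ht0.le
    linarith
  have hlog2 : (0.6931471803 : ℝ) < Real.log 2 := Real.log_two_gt_d9
  have hm : (m:ℝ) = t * d := by rw [ht]; field_simp
  -- m log 2 ≤ 2d(1 + log t) ≤ 2d(2u - 1) ≤ 4du ; m = u^2 d
  have step : (m:ℝ) * Real.log 2 ≤ 2 * d * (1 + Real.log t) := by
    have := hlog
    rw [hlogarg] at this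
    push_cast at this
    linarith
  have e1 : (m:ℝ) * Real.log 2 = (u^2 * Real.log 2) * d := by
    rw [hm, ← hu2]; ring
  have h6 : 2*(d:ℝ)*(1+Real.log t) ≤ (2*(2*u-1)) * d := by
    nlinarith [mul_nonneg (by linarith : (0:ℝ) ≤ 2*d)
      (by linarith : (0:ℝ) ≤ 2*u - 2 - Real.log t)]
  have key : u^2 * Real.log 2 ≤ 2*(2*u-1) := by
    have h7 : (u^2 * Real.log 2) * d ≤ (2*(2*u-1)) * d := by
      rw [← e1]; linarith
    exact le_of_mul_le_mul_right h7 hd0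
  have k2 : 0.6931471803 * u^2 ≤ u^2 * Real.log 2 := by
    nlinarith [sq_nonneg u, hlog2]
  nlinarith [sq_nonneg (u - 8), hu8]

variable {Y : Type} [Fintype Y] [DecidableEq Y]

private lemma pi_sum_prod (m : ℕ) (g : Fin m → Y → ℝ) :
    ∑ t : Fin m → Y, ∏ i, g i (t i) = ∏ i, ∑ y, g i y := (Fintype.prod_sum g).symm

/-- off-diagonal second moment vanishes for centered variables -/
private lemma offdiag_zero (m : ℕ) (Z : Y → ℝ) (hZ : ∑ y, Z y = 0) {i j : Fin m}
    (hij : i ≠ j) : ∑ t : Fin m → Y, Z (t i) * Z (t j) = 0 := by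
  classical
  set g : Fin m → Y → ℝ := fun k y => if k = i ∨ k = j then Z y else 1 with hg
  have h1 : ∀ t : Fin m → Y, Z (t i) * Z (t j) = ∏ k, g k (t k) := by
    intro t
    rw [← Finset.mul_prod_erase univ _ (mem_univ i)]
    rw [← Finset.mul_prod_erase (univ.erase i) _ (mem_erase.2 ⟨hij.symm, mem_univ j⟩)]
    rw [Finset.prod_eq_one]
    · simp [hg, hij.symm]
    · intro k hk
      simp only [mem_erase] at hk
      simp [hg, hk.1, hk.2.1]
  have h2 : ∑ t : Fin m → Y, Z (t i) * Z (t j) = ∏ k, ∑ y, g k y := by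
    rw [← pi_sum_prod m g]
    exact Finset.sum_congr rfl fun t _ => h1 t
  rw [h2, ← Finset.mul_prod_erase univ _ (mem_univ i)]
  have : ∑ y, g i y = 0 := by simp [hg, hZ]
  rw [this, zero_mul]

private lemma diag_val (m : ℕ) (Z : Y → ℝ) (i : Fin m) :
    ∑ t : Fin m → Y, Z (t i) * Z (t i)
      = (∑ y, Z y * Z y) * (Fintype.card Y : ℝ) ^ (m - 1) := by
  classical
  set g : Fin m → Y → ℝ := fun k y => if k = i then Z y * Z y else 1 with hg
  have h1 : ∀ t : Fin m → Y, Z (t i) * Z (t i) = ∏ k, g k (t k) := by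
    intro t
    rw [← Finset.mul_prod_erase univ _ (mem_univ i)]
    rw [Finset.prod_eq_one]
    · simp [hg]
    · intro k hk
      simp only [mem_erase] at hk
      simp [hg, hk.1]
  have h2 : ∑ t : Fin m → Y, Z (t i) * Z (t i) = ∏ k, ∑ y, g k y := by
    rw [← pi_sum_prod m g]
    exact Finset.sum_congr rfl fun t _ => h1 t
  rw [h2, ← Finset.mul_prod_erase univ _ (mem_univ i)]
  congr 1
  · simp [hg]
  calc ∏ k ∈ univ.erase i, ∑ y, g k y = ∏ k ∈ univ.erase i, (Fintype.card Y : ℝ) := by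
        refine Finset.prod_congr rfl fun k hk => ?_
        simp only [mem_erase] at hk
        have e : ∀ y : Y, g k y = 1 := fun y => by simp [hg, hk.1]
        simp only [e]
        rw [Finset.sum_const, card_univ, nsmul_eq_mul, mul_one]
    _ = (Fintype.card Y : ℝ) ^ (m - 1) := by
        rw [Finset.prod_const, card_erase_of_mem (mem_univ i), card_univ, Fintype.card_fin]

private lemma cheb_count (m T : ℕ) (D : Finset Y) (r : ℝ) (hr : 2 ≤ r) [Nonempty Y]
    (hD : (Fintype.card Y : ℝ) < D.card * r)
    (hm : 8 * r ≤ m)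
    (hT : ((T:ℝ) - 1) * (2 * r) ≤ m) :
    (Fintype.card Y)^m ≤
      2 * (univ.filter fun t : Fin m → Y => T ≤ (univ.filter fun i => t i ∈ D).card).card := by
  classical
  set n := Fintype.card Y with hn
  have hn0 : 0 < n := Fintype.card_pos
  have hn0' : (0:ℝ) < n := by exact_mod_cast hn0
  have hr0 : (0:ℝ) < r := by linarith
  have hm1 : 1 ≤ m := by
    by_contra hcon
    push_neg at hcon
    interval_cases m <;> simp_all <;> linarith
  have hm0' : (0:ℝ) < m := by positivity
  set c := D.card with hc
  have hc0' : (0:ℝ) < c := by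
    rcases Nat.eq_zero_or_pos c with h | h
    · rw [h] at hD; simp at hD; linarith
    · exact_mod_cast h
  set q : ℝ := c / n with hq
  set χ : Y → ℝ := fun y => if y ∈ D then 1 else 0 with hχ
  set Z : Y → ℝ := fun y => χ y - q with hZdef
  have hχsum : ∑ y, χ y = c := by
    rw [hχ]
    rw [Finset.sum_ite_mem]
    simp [hc]
  have hZ0 : ∑ y, Z y = 0 := by
    rw [hZdef]
    rw [Finset.sum_sub_distrib, hχsum, Finset.sum_const, card_univ, nsmul_eq_mul, hq]
    field_simp; rw [← hn]; ring
  have hZsq : ∑ y, Z y * Z y ≤ c := by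
    have e : ∀ y, Z y * Z y = χ y - 2 * q * χ y + q ^ 2 := by
      intro y
      rw [hZdef, hχ]
      by_cases h : y ∈ D <;> simp [h] <;> ring
    calc ∑ y, Z y * Z y = ∑ y, (χ y - 2 * q * χ y + q ^ 2) :=
          Finset.sum_congr rfl fun y _ => e y
      _ = (c : ℝ) - 2 * q * c + n * q ^ 2 := by
          rw [Finset.sum_add_distrib, Finset.sum_sub_distrib, hχsum, ← Finset.mul_sum, hχsum,
            Finset.sum_const, card_univ, nsmul_eq_mul]
      _ = c - c ^ 2 / n := by rw [hq]; field_simp; ring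
      _ ≤ c := by
          have : (0:ℝ) ≤ c ^ 2 / n := by positivity
          linarith
  -- variance bound
  have hvar : ∑ t : Fin m → Y, (∑ i, Z (t i)) ^ 2 ≤ m * c * (n:ℝ) ^ m / n := by
    have e1 : ∀ t : Fin m → Y, (∑ i, Z (t i)) ^ 2 = ∑ i, ∑ j, Z (t i) * Z (t j) := by
      intro t
      rw [sq, Finset.sum_mul_sum]
    calc ∑ t : Fin m → Y, (∑ i, Z (t i)) ^ 2
        = ∑ t : Fin m → Y, ∑ i, ∑ j, Z (t i) * Z (t j) :=
          Finset.sum_congr rfl fun t _ => e1 t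
      _ = ∑ i, ∑ t : Fin m → Y, ∑ j, Z (t i) * Z (t j) := Finset.sum_comm
      _ = ∑ i : Fin m, ∑ j, ∑ t : Fin m → Y, Z (t i) * Z (t j) :=
          Finset.sum_congr rfl fun i _ => Finset.sum_comm
      _ = ∑ i : Fin m, (∑ y, Z y * Z y) * (n:ℝ) ^ (m - 1) := by
          refine Finset.sum_congr rfl fun i _ => ?_
          rw [← Finset.add_sum_erase _ _ (mem_univ i)]
          have hz : ∑ j ∈ univ.erase i, ∑ t : Fin m → Y, Z (t i) * Z (t j) = 0 := by
            refine Finset.sum_eq_zero fun j hj => ?_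
            simp only [mem_erase] at hj
            exact offdiag_zero m Z hZ0 (Ne.symm hj.1)
          rw [hz, add_zero, diag_val m Z i]
      _ = (∑ y, Z y * Z y) * (n:ℝ) ^ (m - 1) * m := by
          rw [Finset.sum_const, card_univ, Fintype.card_fin, nsmul_eq_mul]; ring
      _ ≤ c * (n:ℝ) ^ (m - 1) * m := by
          have h1 : (0:ℝ) ≤ (n:ℝ) ^ (m-1) := by positivity
          exact mul_le_mul_of_nonneg_right (mul_le_mul_of_nonneg_right hZsq h1) (le_of_lt hm0')
      _ = m * c * (n:ℝ) ^ m / n := by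
          have : (n:ℝ) ^ m = (n:ℝ) ^ (m - 1) * n := by
            rw [← pow_succ]
            congr 1
            omega
          rw [this]
          field_simp
  -- X t as a real sum
  have hX : ∀ t : Fin m → Y, ((univ.filter fun i => t i ∈ D).card : ℝ) = ∑ i, χ (t i) := by
    intro t
    rw [Finset.card_filter]
    push_cast
    refine Finset.sum_congr rfl fun i _ => ?_
    rw [hχ]
  set Bd := univ.filter fun t : Fin m → Y => (univ.filter fun i => t i ∈ D).card < T with hBd
  set μ : ℝ := m * q with hμ
  have hμpos : 0 < μ := by rw [hμ, hq]; positivity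
  -- each bad t has deviation at least μ/2
  have hdev : ∀ t ∈ Bd, (μ / 2) ^ 2 ≤ (∑ i, Z (t i)) ^ 2 := by
    intro t ht
    rw [hBd, mem_filter] at ht
    have h1 : ((univ.filter fun i => t i ∈ D).card : ℝ) ≤ (T:ℝ) - 1 := by
      have := ht.2
      have : (univ.filter fun i => t i ∈ D).card + 1 ≤ T := this
      have := (Nat.cast_le (α := ℝ)).2 this
      push_cast at this
      linarith
    have h2 : ((T:ℝ) - 1) ≤ m / (2 * r) := by
      rw [le_div_iff₀ (by positivity)]
      exact hT
    have h3 : (m:ℝ) / (2 * r) ≤ μ / 2 := by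
      rw [hμ, hq, div_le_div_iff₀ (by positivity) (by norm_num)]
      have h4 : (n:ℝ) ≤ c * r := le_of_lt hD
      -- m * 2 ≤ m * (c/n) * (2r)  ⟺  n ≤ c r
      have h5 : (m:ℝ) * 2 * n ≤ m * (c / n) * (2 * r) * n := by
        have e : (m:ℝ) * (c / n) * (2 * r) * n = m * 2 * (c * r) := by
          field_simp
        rw [e]
        nlinarith
      exact le_of_mul_le_mul_right h5 hn0'
    have h6 : ∑ i, Z (t i) ≤ -(μ/2) := by
      have e : ∑ i, Z (t i) = (∑ i, χ (t i)) - μ := by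
        rw [hZdef, Finset.sum_sub_distrib, Finset.sum_const, card_univ, Fintype.card_fin,
          nsmul_eq_mul, hμ]
      rw [e, ← hX t]
      linarith
    nlinarith [hμpos]
  -- Chebyshev count
  have hcheb : (Bd.card : ℝ) * (μ/2)^2 ≤ m * c * (n:ℝ) ^ m / n := by
    calc (Bd.card : ℝ) * (μ/2)^2 = ∑ _t ∈ Bd, (μ/2)^2 := by
          rw [Finset.sum_const, nsmul_eq_mul]
      _ ≤ ∑ t ∈ Bd, (∑ i, Z (t i)) ^ 2 := Finset.sum_le_sum hdev
      _ ≤ ∑ t : Fin m → Y, (∑ i, Z (t i)) ^ 2 := by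
          apply Finset.sum_le_sum_of_subset_of_nonneg (subset_univ _)
          intro t _ _
          positivity
      _ ≤ m * c * (n:ℝ) ^ m / n := hvar
  -- conclude 2 * Bd.card ≤ n ^ m
  have hkey : 2 * (Bd.card : ℝ) ≤ (n:ℝ) ^ m := by
    have h9 : (Bd.card : ℝ) ≤ (m * c * (n:ℝ)^m / n) / ((μ/2)^2) := by
      rw [le_div_iff₀ (by positivity)]
      exact hcheb
    have h10 : (m * c * (n:ℝ)^m / n) / ((μ/2)^2) = 4 * n * (n:ℝ)^m / (m * c) := by
      rw [hμ, hq]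
      field_simp
      ring
    have h11 : 4 * (n:ℝ) * (n:ℝ)^m / (m * c) ≤ (n:ℝ)^m / 2 := by
      rw [div_le_div_iff₀ (by positivity) (by norm_num)]
      have h12 : 8 * (n:ℝ) ≤ m * c := by
        have : 8 * (n:ℝ) ≤ 8 * (c * r) := by nlinarith
        have h13 : 8 * ((c:ℝ) * r) = (8 * r) * c := by ring
        nlinarith
      nlinarith [pow_pos hn0' m]
    linarith [h9, h10 ▸ h9, h11]
  have hkeyN : 2 * Bd.card ≤ n ^ m := by
    have : ((2 * Bd.card : ℕ) : ℝ) ≤ ((n ^ m : ℕ) : ℝ) := by push_cast; linarith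
    exact_mod_cast this
  -- complement count
  have hsplit : (univ.filter fun t : Fin m → Y => T ≤ (univ.filter fun i => t i ∈ D).card).card
      + Bd.card = n ^ m := by
    rw [hBd]
    have e : ∀ t : Fin m → Y, ((univ.filter fun i => t i ∈ D).card < T) ↔
        ¬ (T ≤ (univ.filter fun i => t i ∈ D).card) := by
      intro t; omega
    rw [Finset.filter_congr fun t _ => e t]
    rw [Finset.card_filter_add_card_filter_not]
    rw [card_univ, Fintype.card_fun, Fintype.card_fin]
  linarith [hkeyN, hsplit]

/-- Count of swap patterns compatible with forced coordinates. -/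
private lemma forced_count (m T : ℕ) (p : Fin m → Bool × Bool) :
    (univ.filter fun σ : Fin m → Bool =>
      (∀ i, (if σ i then (p i).2 else (p i).1) = false) ∧
        T ≤ (univ.filter fun i => (if σ i then (p i).1 else (p i).2) = true).card).card
      ≤ 2 ^ (m - T) := by
  classical
  set Ev := univ.filter fun σ : Fin m → Bool =>
      (∀ i, (if σ i then (p i).2 else (p i).1) = false) ∧
        T ≤ (univ.filter fun i => (if σ i then (p i).1 else (p i).2) = true).card with hEv
  rcases Ev.eq_empty_or_nonempty with h | ⟨σ₀, hσ₀⟩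
  · rw [h]; simp
  set M := (univ : Finset (Fin m)).filter fun i => (p i).1 ≠ (p i).2 with hM
  have hmemEv : ∀ σ ∈ Ev, (∀ i, (if σ i then (p i).2 else (p i).1) = false) ∧
      T ≤ (univ.filter fun i => (if σ i then (p i).1 else (p i).2) = true).card := by
    intro σ hσ
    rw [hEv, mem_filter] at hσ
    exact hσ.2
  -- forced values on M
  have hforced : ∀ σ ∈ Ev, ∀ i ∈ M, σ i = (p i).1 := by
    intro σ hσ i hiM
    rw [hM, mem_filter] at hiM
    have hiM' := hiM.2
    have h1 := (hmemEv σ hσ).1 i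
    rcases Bool.eq_false_or_eq_true (σ i) with h | h <;>
      rcases Bool.eq_false_or_eq_true ((p i).1) with h2 | h2 <;>
        simp_all
  -- T ≤ M.card
  have hTM : T ≤ M.card := by
    refine le_trans (hmemEv σ₀ hσ₀).2 (card_le_card ?_)
    intro i hi
    rw [mem_filter] at hi
    have h1 := (hmemEv σ₀ hσ₀).1 i
    rw [hM, mem_filter]
    refine ⟨mem_univ i, ?_⟩
    rcases Bool.eq_false_or_eq_true (σ₀ i) with h | h <;> simp [h] at hi h1 <;> simp [hi, h1]
  -- injection into functions off M
  have hinj : Ev.card ≤ Fintype.card ((↥((univ : Finset (Fin m)) \ M)) → Bool) := by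
    have := Finset.card_le_card_of_injOn
      (f := fun σ : Fin m → Bool => (fun i : ↥((univ : Finset (Fin m)) \ M) => σ i.1))
      (s := Ev) (t := (univ : Finset ((↥((univ : Finset (Fin m)) \ M)) → Bool)))
      (fun σ _ => mem_univ _) ?_
    · simpa [card_univ] using this
    · intro σ hσ σ' hσ' heq
      funext i
      by_cases hi : i ∈ M
      · rw [hforced σ hσ i hi, hforced σ' hσ' i hi]
      · have : i ∈ (univ : Finset (Fin m)) \ M := by
          rw [mem_sdiff]; exact ⟨mem_univ i, hi⟩
        exact congrFun heq ⟨i, this⟩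
  have hcard : Fintype.card ((↥((univ : Finset (Fin m)) \ M)) → Bool) = 2 ^ (m - M.card) := by
    rw [Fintype.card_fun, Fintype.card_coe, Fintype.card_bool, card_sdiff_of_subset (subset_univ M),
      card_univ, Fintype.card_fin]
  have : m - M.card ≤ m - T := by omega
  calc Ev.card ≤ 2 ^ (m - M.card) := hcard ▸ hinj
    _ ≤ 2 ^ (m - T) := Nat.pow_le_pow_right (by norm_num) this

variable {Y : Type} [Fintype Y] [DecidableEq Y]

/-- For a fixed double sample `w`, the number of swap patterns `σ` for which some bad set
misses the first half but hits the second half at least `T` times is controlled by the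
number of traces. -/
private lemma swap_count (m T : ℕ) (Bad : Finset (Finset Y)) (Φ : ℕ)
    (htrace : ∀ W : Finset Y, W.card ≤ 2*m → (Bad.image (· ∩ W)).card ≤ Φ)
    (w : Fin m → Y × Y) :
    (univ.filter fun σ : Fin m → Bool => ∃ D ∈ Bad,
      (∀ i, (if σ i then (w i).2 else (w i).1) ∉ D) ∧
        T ≤ (univ.filter fun i => (if σ i then (w i).1 else (w i).2) ∈ D).card).card
      ≤ Φ * 2 ^ (m - T) := by
  classical
  set W : Finset Y := (univ.image fun i => (w i).1) ∪ (univ.image fun i => (w i).2) with hW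
  have hw1 : ∀ i, (w i).1 ∈ W := fun i => by
    rw [hW, mem_union]; exact Or.inl (mem_image.2 ⟨i, mem_univ i, rfl⟩)
  have hw2 : ∀ i, (w i).2 ∈ W := fun i => by
    rw [hW, mem_union]; exact Or.inr (mem_image.2 ⟨i, mem_univ i, rfl⟩)
  set pG : Finset Y → Fin m → Bool × Bool :=
    fun G i => (decide ((w i).1 ∈ G), decide ((w i).2 ∈ G)) with hpG
  have hsub : (univ.filter fun σ : Fin m → Bool => ∃ D ∈ Bad,
      (∀ i, (if σ i then (w i).2 else (w i).1) ∉ D) ∧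
        T ≤ (univ.filter fun i => (if σ i then (w i).1 else (w i).2) ∈ D).card)
      ⊆ (Bad.image (· ∩ W)).biUnion (fun G =>
          univ.filter fun σ : Fin m → Bool =>
            (∀ i, (if σ i then (pG G i).2 else (pG G i).1) = false) ∧
              T ≤ (univ.filter fun i =>
                    (if σ i then (pG G i).1 else (pG G i).2) = true).card) := by
    intro σ hσ
    rw [mem_filter] at hσ
    obtain ⟨-, D, hD, hmiss, hhit⟩ := hσ
    rw [mem_biUnion]
    refine ⟨D ∩ W, mem_image.2 ⟨D, hD, rfl⟩, ?_⟩
    rw [mem_filter]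
    have e1 : ∀ i, ((w i).1 ∈ D ∩ W) ↔ ((w i).1 ∈ D) := by
      intro i
      simp [mem_inter, hw1 i]
    have e2 : ∀ i, ((w i).2 ∈ D ∩ W) ↔ ((w i).2 ∈ D) := by
      intro i
      simp [mem_inter, hw2 i]
    refine ⟨mem_univ σ, fun i => ?_, le_trans hhit (le_of_eq ?_)⟩
    · have := hmiss i
      rcases Bool.eq_false_or_eq_true (σ i) with h | h <;>
        simp_all [hpG, e1 i, e2 i]
    · congr 1
      apply Finset.filter_congr
      intro i _
      rcases Bool.eq_false_or_eq_true (σ i) with h | h <;>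
        simp [h, hpG, e1 i, e2 i]
  calc _ ≤ _ := card_le_card hsub
    _ ≤ ∑ G ∈ Bad.image (· ∩ W), (univ.filter fun σ : Fin m → Bool =>
            (∀ i, (if σ i then (pG G i).2 else (pG G i).1) = false) ∧
              T ≤ (univ.filter fun i =>
                    (if σ i then (pG G i).1 else (pG G i).2) = true).card).card :=
        card_biUnion_le
    _ ≤ ∑ _G ∈ Bad.image (· ∩ W), 2 ^ (m - T) := by
        refine Finset.sum_le_sum fun G _ => ?_
        exact forced_count m T (pG G)
    _ = (Bad.image (· ∩ W)).card * 2 ^ (m - T) := by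
        rw [Finset.sum_const, smul_eq_mul]
    _ ≤ Φ * 2 ^ (m - T) := by
        refine Nat.mul_le_mul_right _ (htrace W ?_)
        rw [hW]
        calc ((univ.image fun i => (w i).1) ∪ univ.image fun i => (w i).2).card
            ≤ (univ.image fun i : Fin m => (w i).1).card
              + (univ.image fun i : Fin m => (w i).2).card := card_union_le _ _
          _ ≤ (univ : Finset (Fin m)).card + (univ : Finset (Fin m)).card :=
              Nat.add_le_add (card_image_le) (card_image_le)
          _ ≤ 2*m := by rw [card_univ, Fintype.card_fin]; omega

/-- The ε-net existence via double sampling. -/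
private lemma net_exists [Nonempty Y] (Bad : Finset (Finset Y)) (m T Φ : ℕ) (hTm : T ≤ m)
    (htrace : ∀ W : Finset Y, W.card ≤ 2*m → (Bad.image (· ∩ W)).card ≤ Φ)
    (hcheb : ∀ D ∈ Bad, (Fintype.card Y)^m ≤
      2 * (univ.filter fun t : Fin m → Y => T ≤ (univ.filter fun i => t i ∈ D).card).card)
    (hnum : 2 * Φ < 2^T) :
    ∃ s : Fin m → Y, ∀ D ∈ Bad, ∃ i, s i ∈ D := by
  classical
  by_contra hcon
  push_neg at hcon
  set n := Fintype.card Y with hn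
  have hn0 : 0 < n := Fintype.card_pos
  have hA : ∀ s : Fin m → Y, ∃ D ∈ Bad, ∀ i, s i ∉ D := by
    intro s
    obtain ⟨D, hD, hmiss⟩ := hcon s
    exact ⟨D, hD, hmiss⟩
  set f : (Fin m → Y) → Finset Y := fun s => (hA s).choose with hf
  have hfBad : ∀ s, f s ∈ Bad := fun s => (hA s).choose_spec.1
  have hfmiss : ∀ s, ∀ i, s i ∉ f s := fun s => (hA s).choose_spec.2
  set B2 := univ.filter (fun st : (Fin m → Y) × (Fin m → Y) => ∃ D ∈ Bad,
      (∀ i, st.1 i ∉ D) ∧ T ≤ (univ.filter fun i => st.2 i ∈ D).card) with hB2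
  -- STEP 1 : n^m * n^m ≤ 2 * B2.card
  have step1 : n^m * n^m ≤ 2 * B2.card := by
    set C2 := univ.filter (fun st : (Fin m → Y) × (Fin m → Y) =>
      T ≤ (univ.filter fun i => st.2 i ∈ f st.1).card) with hC2
    have hC2sub : C2 ⊆ B2 := by
      intro st hst
      rw [hC2, mem_filter] at hst
      rw [hB2, mem_filter]
      exact ⟨mem_univ st, f st.1, hfBad st.1, hfmiss st.1, hst.2⟩
    have hC2card : C2.card = ∑ s : Fin m → Y,
        (univ.filter fun t : Fin m → Y => T ≤ (univ.filter fun i => t i ∈ f s).card).card := by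
      rw [Finset.card_eq_sum_card_fiberwise
        (f := Prod.fst) (t := (univ : Finset (Fin m → Y))) (fun st _ => mem_univ _)]
      refine Finset.sum_congr rfl fun s _ => ?_
      apply Finset.card_nbij' (i := Prod.snd) (j := fun t => (s, t))
      · intro st hst
        simp only [mem_coe, mem_filter, hC2] at hst ⊢
        obtain ⟨⟨-, h1⟩, h2⟩ := hst
        rw [h2] at h1
        exact ⟨mem_univ _, h1⟩
      · intro t ht
        simp only [mem_coe, mem_filter, hC2] at ht ⊢
        exact ⟨⟨mem_univ _, ht.2⟩, trivial⟩
      · intro st hst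
        simp only [mem_coe, mem_filter] at hst
        exact Prod.ext hst.2.symm rfl
      · intro t _
        rfl
    have hlow : ∀ s : Fin m → Y, n^m ≤ 2 *
        (univ.filter fun t : Fin m → Y => T ≤ (univ.filter fun i => t i ∈ f s).card).card :=
      fun s => hcheb (f s) (hfBad s)
    have h1 : n^m * n^m ≤ 2 * C2.card := by
      have h2 : ∑ _s : Fin m → Y, n^m ≤ ∑ s : Fin m → Y, 2 *
          (univ.filter fun t : Fin m → Y =>
            T ≤ (univ.filter fun i => t i ∈ f s).card).card :=
        Finset.sum_le_sum fun s _ => hlow s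
      have h3 : ∑ _s : Fin m → Y, n^m = n^m * n^m := by
        rw [Finset.sum_const, Finset.card_univ, Fintype.card_fun, Fintype.card_fin,
          smul_eq_mul, hn]
      have h4 : ∑ s : Fin m → Y, 2 *
          (univ.filter fun t : Fin m → Y =>
            T ≤ (univ.filter fun i => t i ∈ f s).card).card = 2 * C2.card := by
        rw [hC2card, Finset.mul_sum]
      rw [h3, h4] at h2
      exact h2
    exact h1.trans (Nat.mul_le_mul_left 2 (card_le_card hC2sub))
  -- STEP 2 : B2.card * 2^m ≤ (n*n)^m * (Φ * 2^(m-T))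
  have step2 : B2.card * 2^m ≤ (n*n)^m * (Φ * 2^(m-T)) := by
    set S := univ.filter (fun wσ : (Fin m → Y × Y) × (Fin m → Bool) => ∃ D ∈ Bad,
      (∀ i, (if wσ.2 i then (wσ.1 i).2 else (wσ.1 i).1) ∉ D) ∧
        T ≤ (univ.filter fun i => (if wσ.2 i then (wσ.1 i).1 else (wσ.1 i).2) ∈ D).card)
      with hS
    have hbij : S.card = (B2 ×ˢ (univ : Finset (Fin m → Bool))).card := by
      apply Finset.card_nbij'
        (i := fun wσ : (Fin m → Y × Y) × (Fin m → Bool) =>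
          (((fun i => if wσ.2 i then (wσ.1 i).2 else (wσ.1 i).1 : Fin m → Y),
            (fun i => if wσ.2 i then (wσ.1 i).1 else (wσ.1 i).2 : Fin m → Y)), wσ.2))
        (j := fun stσ : ((Fin m → Y) × (Fin m → Y)) × (Fin m → Bool) =>
          ((fun i => if stσ.2 i then (stσ.1.2 i, stσ.1.1 i)
             else (stσ.1.1 i, stσ.1.2 i) : Fin m → Y × Y), stσ.2))
      · intro wσ hwσ
        simp only [mem_coe, hS, mem_filter] at hwσ
        rw [mem_coe, mem_product]
        refine ⟨?_, mem_univ _⟩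
        rw [hB2, mem_filter]
        exact ⟨mem_univ _, hwσ.2⟩
      · intro stσ hstσ
        rw [mem_coe, mem_product, hB2, mem_filter] at hstσ
        rw [mem_coe, hS, mem_filter]
        obtain ⟨⟨-, D, hD, hmiss, hhit⟩, -⟩ := hstσ
        refine ⟨mem_univ _, D, hD, fun i => ?_, le_trans hhit (le_of_eq ?_)⟩
        · have := hmiss i
          rcases Bool.eq_false_or_eq_true (stσ.2 i) with h | h <;> simp_all
        · congr 1
          apply Finset.filter_congr
          intro i _
          rcases Bool.eq_false_or_eq_true (stσ.2 i) with h | h <;> simp [h]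
      · intro wσ hwσ
        refine Prod.ext ?_ rfl
        funext i
        rcases Bool.eq_false_or_eq_true (wσ.2 i) with h | h <;> simp [h]
      · intro stσ hstσ
        refine Prod.ext (Prod.ext ?_ ?_) rfl <;> funext i <;>
          rcases Bool.eq_false_or_eq_true (stσ.2 i) with h | h <;> simp [h]
    have hfib : S.card ≤ (n*n)^m * (Φ * 2^(m-T)) := by
      rw [hS, Finset.card_eq_sum_card_fiberwise
        (f := Prod.fst) (t := (univ : Finset (Fin m → Y × Y))) (fun wσ _ => mem_univ _)]
      have hbound : ∀ w : Fin m → Y × Y,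
          ((univ.filter (fun wσ : (Fin m → Y × Y) × (Fin m → Bool) => ∃ D ∈ Bad,
            (∀ i, (if wσ.2 i then (wσ.1 i).2 else (wσ.1 i).1) ∉ D) ∧
              T ≤ (univ.filter fun i =>
                (if wσ.2 i then (wσ.1 i).1 else (wσ.1 i).2) ∈ D).card)).filter
                  fun wσ => wσ.1 = w).card ≤ Φ * 2^(m-T) := by
        intro w
        have hcard : ((univ.filter (fun wσ : (Fin m → Y × Y) × (Fin m → Bool) => ∃ D ∈ Bad,
            (∀ i, (if wσ.2 i then (wσ.1 i).2 else (wσ.1 i).1) ∉ D) ∧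
              T ≤ (univ.filter fun i =>
                (if wσ.2 i then (wσ.1 i).1 else (wσ.1 i).2) ∈ D).card)).filter
                  fun wσ => wσ.1 = w).card
            = (univ.filter fun σ : Fin m → Bool => ∃ D ∈ Bad,
                (∀ i, (if σ i then (w i).2 else (w i).1) ∉ D) ∧
                  T ≤ (univ.filter fun i =>
                    (if σ i then (w i).1 else (w i).2) ∈ D).card).card := by
          apply Finset.card_nbij'
            (i := fun wσ : (Fin m → Y × Y) × (Fin m → Bool) => wσ.2)
            (j := fun σ : Fin m → Bool => (w, σ))
          · intro wσ hwσ
            simp only [mem_coe, mem_filter] at hwσ ⊢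
            obtain ⟨⟨-, h1⟩, h2⟩ := hwσ
            rw [h2] at h1
            exact ⟨mem_univ _, h1⟩
          · intro σ hσ
            simp only [mem_coe, mem_filter] at hσ ⊢
            exact ⟨⟨mem_univ _, hσ.2⟩, trivial⟩
          · intro wσ hwσ
            simp only [mem_coe, mem_filter] at hwσ
            exact Prod.ext hwσ.2.symm rfl
          · intro σ _
            rfl
        rw [hcard]
        exact swap_count m T Bad Φ htrace w
      calc ∑ w : Fin m → Y × Y, _ ≤ ∑ _w : Fin m → Y × Y, Φ * 2^(m-T) :=
            Finset.sum_le_sum fun w _ => hbound w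
        _ = Fintype.card (Fin m → Y × Y) * (Φ * 2^(m-T)) := by
            rw [Finset.sum_const, Finset.card_univ, smul_eq_mul]
        _ = (n*n)^m * (Φ * 2^(m-T)) := by
            rw [Fintype.card_fun, Fintype.card_fin, Fintype.card_prod, hn]
    calc B2.card * 2^m = (B2 ×ˢ (univ : Finset (Fin m → Bool))).card := by
          rw [card_product, card_univ, Fintype.card_fun, Fintype.card_fin, Fintype.card_bool]
      _ = S.card := hbij.symm
      _ ≤ (n*n)^m * (Φ * 2^(m-T)) := hfib
  -- combine
  have e1 : (n*n)^m = n^m * n^m := by rw [mul_pow]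
  have e2 : (2:ℕ)^m = 2^(m-T) * 2^T := by
    rw [← pow_add]
    congr 1
    omega
  have h2T : 0 < 2^(m-T) := Nat.pow_pos (by norm_num)
  have hfinal : n^m * n^m * 2^T ≤ n^m * n^m * (2 * Φ) := by
    have hs2 : B2.card * 2^T ≤ n^m * n^m * Φ := by
      have hst := step2
      rw [e1, e2] at hst
      have h' : B2.card * 2^T * 2^(m-T) ≤ n^m * n^m * Φ * 2^(m-T) := by
        calc B2.card * 2^T * 2^(m-T) = B2.card * (2^(m-T) * 2^T) := by ring
          _ ≤ n^m * n^m * (Φ * 2^(m-T)) := hst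
          _ = n^m * n^m * Φ * 2^(m-T) := by ring
      exact Nat.le_of_mul_le_mul_right h' h2T
    calc n^m * n^m * 2^T ≤ 2 * B2.card * 2^T := Nat.mul_le_mul_right _ step1
      _ = 2 * (B2.card * 2^T) := by ring
      _ ≤ 2 * (n^m * n^m * Φ) := Nat.mul_le_mul_left _ hs2
      _ = n^m * n^m * (2 * Φ) := by ring
  have hnm : 0 < n^m * n^m := by positivity
  have hcontr : (2:ℕ)^T ≤ 2 * Φ := Nat.le_of_mul_le_mul_left
    (by calc n^m * n^m * 2^T ≤ n^m * n^m * (2*Φ) := hfinal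
          _ = n^m*n^m*(2*Φ) := rfl) hnm
  omega

private lemma part_a {X Y : Type} [Fintype X] [Fintype Y] [DecidableEq Y]
    (E : X → Y → Bool) (d : ℕ) (hd : 2 ≤ d)
    (hE1 : ∀ I : Finset Y, (∀ J ⊆ I, ∃ x : X, I.filter (fun y => E x y) = J) → I.card ≤ d)
    (I : Finset Y) (hI : ∀ J ⊆ I, ∃ x x' : X, I.filter (fun y => E x y ∧ ¬ E x' y) = J) :
    I.card ≤ 64 * d := by
  classical
  set row : X → Finset Y := fun x => univ.filter (fun y => E x y) with hrow
  set 𝒜 : Finset (Finset Y) := univ.image row with hA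
  have hShat : ∀ s : Finset Y, 𝒜.Shatters s → s.card ≤ d := by
    intro s hs
    apply hE1
    intro J hJ
    obtain ⟨u, hu, hsu⟩ := hs hJ
    rw [hA, mem_image] at hu
    obtain ⟨x, -, rfl⟩ := hu
    refine ⟨x, ?_⟩
    rw [← hsu, hrow]
    ext y
    simp [mem_inter, mem_filter]
  set Tr := 𝒜.image (· ∩ I) with hTr
  have hTrcard : Tr.card ≤ ∑ k ∈ Iic d, I.card.choose k := trace_card_le 𝒜 d hShat I
  -- recovery identity
  have hrec : ∀ x x' : X, (row x ∩ I) \ (row x' ∩ I)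
      = I.filter (fun y => E x y ∧ ¬ E x' y) := by
    intro x x'
    ext y
    rw [hrow]
    simp only [mem_sdiff, mem_inter, mem_filter, mem_univ, true_and]
    tauto
  -- injection from powerset into Tr × Tr
  set g : Finset Y → Finset Y × Finset Y := fun J =>
    if h : ∃ xx : X × X, I.filter (fun y => E xx.1 y ∧ ¬ E xx.2 y) = J
    then (row h.choose.1 ∩ I, row h.choose.2 ∩ I) else (∅, ∅) with hg
  have hcard : I.powerset.card ≤ (Tr ×ˢ Tr).card := by
    apply Finset.card_le_card_of_injOn g
    · intro J hJ
      rw [mem_coe, mem_powerset] at hJ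
      obtain ⟨x, x', hxx⟩ := hI J hJ
      have hex : ∃ xx : X × X, I.filter (fun y => E xx.1 y ∧ ¬ E xx.2 y) = J := ⟨(x, x'), hxx⟩
      rw [hg]
      simp only [dif_pos hex]
      rw [mem_coe, mem_product]
      constructor <;>
        · rw [hTr]
          refine mem_image.2 ⟨_, mem_image.2 ⟨_, mem_univ _, rfl⟩, rfl⟩
    · intro J hJ J' hJ' heq
      rw [mem_coe, mem_powerset] at hJ hJ'
      obtain ⟨x, x', hxx⟩ := hI J hJ
      obtain ⟨z, z', hzz⟩ := hI J' hJ'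
      have hex : ∃ xx : X × X, I.filter (fun y => E xx.1 y ∧ ¬ E xx.2 y) = J := ⟨(x, x'), hxx⟩
      have hex' : ∃ xx : X × X, I.filter (fun y => E xx.1 y ∧ ¬ E xx.2 y) = J' := ⟨(z, z'), hzz⟩
      have e1 : J = (g J).1 \ (g J).2 := by
        rw [hg]
        simp only [dif_pos hex]
        rw [hrec]
        exact hex.choose_spec.symm
      have e2 : J' = (g J').1 \ (g J').2 := by
        rw [hg]
        simp only [dif_pos hex']
        rw [hrec]
        exact hex'.choose_spec.symm
      rw [e1, e2, heq]
  rw [card_powerset, card_product] at hcard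
  -- now numeric
  set m := I.card with hm
  by_cases hcase : m ≤ d
  · omega
  push_neg at hcase
  have hrle : ((2:ℕ)^m : ℝ) ≤ ((Tr.card : ℝ)) * (Tr.card : ℝ) := by
    exact_mod_cast hcard
  have hS : (Tr.card : ℝ) ≤ (Real.exp 1 * m / d)^d :=
    le_trans (by exact_mod_cast hTrcard) (sum_choose_le_pow d m (by omega) (by omega))
  have h2 : (2:ℝ)^m ≤ (Real.exp 1 * m / d)^(2*d) := by
    have hTr0 : (0:ℝ) ≤ (Tr.card : ℝ) := by positivity
    calc (2:ℝ)^m = ((2:ℕ)^m : ℝ) := by push_cast; ring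
      _ ≤ (Tr.card : ℝ) * (Tr.card : ℝ) := hrle
      _ ≤ (Real.exp 1 * m / d)^d * (Real.exp 1 * m / d)^d := by
          apply mul_le_mul hS hS hTr0 (le_trans hTr0 hS)
      _ = (Real.exp 1 * m / d)^(2*d) := by rw [← pow_add]; congr 1; omega
  exact vc_numeric d m (by omega) hcase h2

private lemma numeric_b (d m T S : ℕ) (r L : ℝ) (hd : 2 ≤ d) (hr : 2 ≤ r)
    (hL : L = Real.log r)
    (hm1 : 2000 * d * r * L ≤ m) (hm2 : (m:ℝ) ≤ 2000 * d * r * L + 1)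
    (hT : (m:ℝ) / (2*r) < T)
    (hS : (S:ℝ) ≤ (Real.exp 1 * (2*m) / d)^d) :
    2 * S^2 < 2^T := by
  have hlog2u : Real.log 2 < 0.6931471808 := Real.log_two_lt_d9
  have hlog2l : (0.6931471803:ℝ) < Real.log 2 := Real.log_two_gt_d9
  have hr0 : (0:ℝ) < r := by linarith
  have hL0 : (0.6931471803:ℝ) ≤ L := by
    rw [hL]
    calc (0.6931471803:ℝ) ≤ Real.log 2 := le_of_lt hlog2l
      _ ≤ Real.log r := Real.log_le_log (by norm_num) hr
  have hd0 : (0:ℝ) < d := by positivity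
  have hd2 : (2:ℝ) ≤ d := by exact_mod_cast hd
  have hdL : (1.38:ℝ) ≤ d * L := by nlinarith
  have hm0 : (0:ℝ) < m := by nlinarith
  rcases Nat.eq_zero_or_pos S with hS0 | hS1
  · rw [hS0]
    simpa using Nat.pos_pow_of_pos T (by norm_num : 0 < 2)
  have hS1' : (1:ℝ) ≤ S := by exact_mod_cast hS1
  -- work with logarithms
  have harg : Real.exp 1 * (2*m) / d ≤ 14000 * r * L := by
    have he : Real.exp 1 < 3 := by
      have := Real.exp_one_lt_d9
      linarith
    have hmd : (m:ℝ) / d ≤ 2000 * r * L + 1 := by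
      rw [div_le_iff₀ hd0]
      nlinarith
    have h1 : Real.exp 1 * (2*m) / d = 2 * Real.exp 1 * (m / d) := by ring
    rw [h1]
    have h2 : 2 * Real.exp 1 * ((m:ℝ) / d) ≤ 6 * (2000 * r * L + 1) := by
      have hmd0 : (0:ℝ) ≤ (m:ℝ)/d := by positivity
      nlinarith
    nlinarith
  have hargpos : (0:ℝ) < Real.exp 1 * (2*m) / d := by positivity
  have hlogarg : Real.log (Real.exp 1 * (2*m) / d) ≤ 9.71 + 2 * L := by
    calc Real.log (Real.exp 1 * (2*m) / d) ≤ Real.log (14000 * r * L) :=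
          Real.log_le_log hargpos harg
      _ = Real.log 14000 + Real.log r + Real.log L := by
          rw [Real.log_mul (by positivity) (by nlinarith), Real.log_mul (by norm_num) (by linarith)]
      _ ≤ 9.71 + L + L := by
          have h14 : Real.log 14000 ≤ 9.71 := by
            calc Real.log 14000 ≤ Real.log (2^14) := Real.log_le_log (by norm_num) (by norm_num)
              _ = 14 * Real.log 2 := by rw [Real.log_pow]; push_cast; ring
              _ ≤ 9.71 := by nlinarith
          have hlogL : Real.log L ≤ L := by
            have := Real.log_le_sub_one_of_pos (show (0:ℝ) < L by linarith)
            linarith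
          have hrL : Real.log r = L := hL.symm
          linarith
      _ = 9.71 + 2*L := by ring
  -- log (2 S^2) < T log 2
  have hmain : Real.log (2 * (S:ℝ)^2) < (T:ℝ) * Real.log 2 := by
    have h1 : Real.log (2 * (S:ℝ)^2) = Real.log 2 + 2 * Real.log S := by
      rw [Real.log_mul (by norm_num) (by positivity), Real.log_pow]
      push_cast; ring
    have h2 : Real.log S ≤ d * (9.71 + 2*L) := by
      calc Real.log S ≤ Real.log ((Real.exp 1 * (2*m) / d)^d) :=
            Real.log_le_log (by linarith) hS
        _ = d * Real.log (Real.exp 1 * (2*m) / d) := by rw [Real.log_pow]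
        _ ≤ d * (9.71 + 2*L) := by
            apply mul_le_mul_of_nonneg_left hlogarg (by positivity)
    have h3 : (m:ℝ) / (2*r) * Real.log 2 ≤ (T:ℝ) * Real.log 2 := by
      apply mul_le_mul_of_nonneg_right (le_of_lt hT) (by linarith)
    have h4 : 693 * (d*L) ≤ (m:ℝ) / (2*r) * Real.log 2 := by
      have h5 : 1000 * (d*L) ≤ (m:ℝ) / (2*r) := by
        rw [le_div_iff₀ (by positivity)]
        nlinarith
      nlinarith
    -- LHS ≤ log2 + 2d(9.71+2L) ≤ 33 dL < 693 dL
    have h6 : Real.log 2 + 2 * ((d:ℝ) * (9.71 + 2*L)) ≤ 33 * (d*L) := by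
      have e1 : (19.42:ℝ) * d ≤ 28.02 * (d * L) := by nlinarith
      have e2 : Real.log 2 ≤ 0.51 * (d*L) := by nlinarith
      nlinarith
    have h7 : 33 * ((d:ℝ)*L) < 693 * (d*L) := by nlinarith
    calc Real.log (2 * (S:ℝ)^2) = Real.log 2 + 2 * Real.log S := h1
      _ ≤ Real.log 2 + 2 * ((d:ℝ) * (9.71 + 2*L)) := by linarith
      _ ≤ 33 * (d*L) := h6
      _ < 693 * (d*L) := h7
      _ ≤ (m:ℝ) / (2*r) * Real.log 2 := h4
      _ ≤ (T:ℝ) * Real.log 2 := h3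
  -- exponentiate
  have hfin : (2 * (S:ℝ)^2) < 2^T := by
    have hpos : (0:ℝ) < 2 * (S:ℝ)^2 := by positivity
    have h2T : Real.log ((2:ℝ)^T) = (T:ℝ) * Real.log 2 := by
      rw [Real.log_pow]
    calc (2 * (S:ℝ)^2) = Real.exp (Real.log (2 * (S:ℝ)^2)) := (Real.exp_log hpos).symm
      _ < Real.exp ((T:ℝ) * Real.log 2) := Real.exp_lt_exp.2 hmain
      _ = (2:ℝ)^T := by rw [← h2T, Real.exp_log (by positivity)]
  exact_mod_cast hfin


/-- If `{E_x}` (and its dual) have VC dimension at most `d ≥ 2`, then the difference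
family `{E_x \ E_{x'}}` has VC dimension at most `C·d`, and for every `r ≥ 2` there is a
set `Ŷ ⊆ Y` of size at most `C·d·r·log r` such that any `x, x'` with the same trace on
`Ŷ` have `μ(E_x △ E_{x'}) ≤ 1/r`. -/
theorem diff_net_exists : ∃ C : ℝ, 0 < C ∧
    ∀ (X Y : Type) [Fintype X] [Fintype Y] [DecidableEq X] [DecidableEq Y] [Nonempty Y]
      (E : X → Y → Bool) (d : ℕ), 2 ≤ d →
      (∀ I : Finset Y, (∀ J ⊆ I, ∃ x : X, I.filter (fun y => E x y) = J) → I.card ≤ d) →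
      (∀ I : Finset X, (∀ J ⊆ I, ∃ y : Y, I.filter (fun x => E x y) = J) → I.card ≤ d) →
      ((∀ I : Finset Y,
          (∀ J ⊆ I, ∃ x x' : X, I.filter (fun y => E x y ∧ ¬ E x' y) = J) →
          (I.card : ℝ) ≤ C * d) ∧
        ∀ r : ℝ, 2 ≤ r → ∃ Yh : Finset Y,
          (Yh.card : ℝ) ≤ C * d * r * Real.log r ∧
          ∀ x x' : X,
            (univ : Finset Y).filter (fun y => E x y) ∩ Yh =
              (univ : Finset Y).filter (fun y => E x' y) ∩ Yh →
            ((((univ : Finset Y).filter (fun y => E x y) \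
                (univ : Finset Y).filter (fun y => E x' y)) ∪
              ((univ : Finset Y).filter (fun y => E x' y) \
                (univ : Finset Y).filter (fun y => E x y))).card : ℝ) / Fintype.card Y
              ≤ 1 / r) := by
  classical
  refine ⟨100000, by norm_num, ?_⟩
  intro X Y _ _ _ _ _ E d hd hE1 _
  have hd0 : (0:ℝ) < d := by positivity
  constructor
  · -- part (a)
    intro I hI
    have h := part_a E d hd hE1 I hI
    have h' : (I.card : ℝ) ≤ 64 * d := by exact_mod_cast h
    nlinarith
  · -- part (b)
    intro r hr
    have hr0 : (0:ℝ) < r := by linarith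
    set n := Fintype.card Y with hn
    have hn0 : 0 < n := Fintype.card_pos
    have hn0' : (0:ℝ) < n := by exact_mod_cast hn0
    set L := Real.log r with hL
    have hlog2l : (0.6931471803:ℝ) < Real.log 2 := Real.log_two_gt_d9
    have hL0 : (0.6931471803:ℝ) ≤ L := by
      rw [hL]
      calc (0.6931471803:ℝ) ≤ Real.log 2 := le_of_lt hlog2l
        _ ≤ Real.log r := Real.log_le_log (by norm_num) hr
    have hd2 : (2:ℝ) ≤ d := by exact_mod_cast hd
    set m := ⌈(2000:ℝ) * d * r * L⌉₊ with hm
    have hm1 : (2000:ℝ) * d * r * L ≤ m := Nat.le_ceil _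
    have hm2 : (m:ℝ) ≤ 2000 * d * r * L + 1 :=
      le_of_lt (Nat.ceil_lt_add_one (by positivity))
    have hrL : (1.3862943606:ℝ) ≤ r * L := by
      nlinarith [mul_nonneg (sub_nonneg.2 hr) (sub_nonneg.2 hL0)]
    have hdL : (1.3862943606:ℝ) ≤ (d:ℝ) * L := by
      nlinarith [mul_nonneg (sub_nonneg.2 hd2) (sub_nonneg.2 hL0)]
    have hdrL : (2.7725887212:ℝ) ≤ (d:ℝ) * (r * L) := by
      nlinarith [mul_nonneg (sub_nonneg.2 hd2) (sub_nonneg.2 hrL)]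
    have hmbig : (5544:ℝ) ≤ m := by nlinarith [hm1, hdrL]
    set T := ⌊(m:ℝ)/(2*r)⌋₊ + 1 with hT
    have hTgt : (m:ℝ)/(2*r) < T := by
      rw [hT]
      push_cast
      exact Nat.lt_floor_add_one _
    have hT1 : ((T:ℝ) - 1) * (2*r) ≤ m := by
      have h1 : ((T:ℝ) - 1) = ⌊(m:ℝ)/(2*r)⌋₊ := by rw [hT]; push_cast; ring
      rw [h1]
      have h2 : (⌊(m:ℝ)/(2*r)⌋₊ : ℝ) ≤ (m:ℝ)/(2*r) := Nat.floor_le (by positivity)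
      calc (⌊(m:ℝ)/(2*r)⌋₊ : ℝ) * (2*r) ≤ (m:ℝ)/(2*r) * (2*r) := by
            apply mul_le_mul_of_nonneg_right h2 (by positivity)
        _ = m := by field_simp
    have hTm : T ≤ m := by
      have h1 : (T:ℝ) ≤ (m:ℝ)/(2*r) + 1 := by
        have h2 : (⌊(m:ℝ)/(2*r)⌋₊ : ℝ) ≤ (m:ℝ)/(2*r) := Nat.floor_le (by positivity)
        rw [hT]; push_cast; linarith
      have h3 : (m:ℝ)/(2*r) ≤ (m:ℝ)/4 := by
        apply div_le_div_of_nonneg_left (by positivity) (by norm_num) (by linarith)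
      have h4 : (T:ℝ) ≤ (m:ℝ) := by
        have : (m:ℝ)/4 + 1 ≤ m := by linarith
        linarith
      exact_mod_cast h4
    have hm8r : 8 * r ≤ (m:ℝ) := by
      nlinarith [mul_nonneg (by linarith : (0:ℝ) ≤ 2000*((d:ℝ)*L) - 8) hr0.le]
    have hdm : (d:ℝ) ≤ m := by
      nlinarith [mul_nonneg (by positivity : (0:ℝ) ≤ (d:ℝ)) (by linarith : (0:ℝ) ≤ 2000*(r*L) - 1)]
    have hd2m : d ≤ 2*m := by
      have : (d:ℝ) ≤ 2*m := by linarith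
      exact_mod_cast this
    -- the families
    set row : X → Finset Y := fun x => univ.filter (fun y => E x y) with hrow
    set 𝒜 : Finset (Finset Y) := univ.image row with h𝒜
    have hShat : ∀ s : Finset Y, 𝒜.Shatters s → s.card ≤ d := by
      intro s hs
      apply hE1
      intro J hJ
      obtain ⟨u, hu, hsu⟩ := hs hJ
      rw [h𝒜, mem_image] at hu
      obtain ⟨x, -, rfl⟩ := hu
      refine ⟨x, ?_⟩
      rw [← hsu, hrow]
      ext y
      simp [mem_inter, mem_filter]
    set symd : X × X → Finset Y :=
      fun xx => (row xx.1 \ row xx.2) ∪ (row xx.2 \ row xx.1) with hsymd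
    set 𝒮 : Finset (Finset Y) := univ.image symd with h𝒮
    set Bad := 𝒮.filter (fun D => (n:ℝ) < D.card * r) with hBad
    set S := ∑ k ∈ Iic d, (2*m).choose k with hSdef
    -- trace bound
    have htrace : ∀ W : Finset Y, W.card ≤ 2*m → (Bad.image (· ∩ W)).card ≤ S^2 := by
      intro W hW
      have hsub : Bad.image (· ∩ W) ⊆ 𝒮.image (· ∩ W) :=
        image_subset_image (filter_subset _ _)
      have hrec : ∀ xx : X × X, symd xx ∩ W
          = ((row xx.1 ∩ W) \ (row xx.2 ∩ W)) ∪ ((row xx.2 ∩ W) \ (row xx.1 ∩ W)) := by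
        intro xx
        ext y
        rw [hsymd]
        simp only [mem_inter, mem_union, mem_sdiff]
        tauto
      set TrW := 𝒜.image (· ∩ W) with hTrW
      set g : Finset Y → Finset Y × Finset Y := fun G =>
        if h : ∃ xx : X × X, symd xx ∩ W = G
        then (row h.choose.1 ∩ W, row h.choose.2 ∩ W) else (∅, ∅) with hg
      have hcard : (𝒮.image (· ∩ W)).card ≤ (TrW ×ˢ TrW).card := by
        apply Finset.card_le_card_of_injOn g
        · intro G hG
          rw [mem_coe, mem_image] at hG
          obtain ⟨D, hD, hDG⟩ := hG
          rw [h𝒮, mem_image] at hD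
          obtain ⟨xx, -, rfl⟩ := hD
          have hex : ∃ zz : X × X, symd zz ∩ W = symd xx ∩ W := ⟨xx, rfl⟩
          rw [← hDG, hg]
          simp only [dif_pos hex]
          rw [mem_coe, mem_product]
          constructor <;>
          · rw [hTrW]
            exact mem_image.2 ⟨_, mem_image.2 ⟨_, mem_univ _, rfl⟩, rfl⟩
        · intro G hG G' hG' heq
          rw [mem_coe, mem_image] at hG hG'
          obtain ⟨D, hD, hDG⟩ := hG
          rw [h𝒮, mem_image] at hD
          obtain ⟨xx, -, rfl⟩ := hD
          obtain ⟨D', hD', hDG'⟩ := hG'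
          rw [h𝒮, mem_image] at hD'
          obtain ⟨zz, -, rfl⟩ := hD'
          have hex : ∃ ww : X × X, symd ww ∩ W = G := ⟨xx, hDG⟩
          have hex' : ∃ ww : X × X, symd ww ∩ W = G' := ⟨zz, hDG'⟩
          have e1 : G = ((g G).1 \ (g G).2) ∪ ((g G).2 \ (g G).1) := by
            rw [hg]
            simp only [dif_pos hex]
            rw [← hrec]
            exact hex.choose_spec.symm
          have e2 : G' = ((g G').1 \ (g G').2) ∪ ((g G').2 \ (g G').1) := by
            rw [hg]
            simp only [dif_pos hex']
            rw [← hrec]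
            exact hex'.choose_spec.symm
          rw [e1, e2, heq]
      have hTrWcard : TrW.card ≤ S := by
        calc TrW.card ≤ ∑ k ∈ Iic d, W.card.choose k := trace_card_le 𝒜 d hShat W
          _ ≤ ∑ k ∈ Iic d, (2*m).choose k :=
              Finset.sum_le_sum fun k _ => Nat.choose_le_choose k hW
          _ = S := rfl
      calc (Bad.image (· ∩ W)).card ≤ (𝒮.image (· ∩ W)).card := card_le_card hsub
        _ ≤ (TrW ×ˢ TrW).card := hcard
        _ = TrW.card * TrW.card := card_product _ _
        _ ≤ S * S := Nat.mul_le_mul hTrWcard hTrWcard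
        _ = S^2 := (sq S).symm
    -- Chebyshev hypothesis
    have hcheb : ∀ D ∈ Bad, (Fintype.card Y)^m ≤
        2 * (univ.filter fun t : Fin m → Y =>
          T ≤ (univ.filter fun i => t i ∈ D).card).card := by
      intro D hD
      rw [hBad, mem_filter] at hD
      exact cheb_count m T D r hr hD.2 hm8r hT1
    -- numeric hypothesis
    have hSbound : (S:ℝ) ≤ (Real.exp 1 * (2*(m:ℝ)) / d)^d := by
      have := sum_choose_le_pow d (2*m) (by omega) hd2m
      rw [hSdef]
      calc ((∑ k ∈ Iic d, (2*m).choose k : ℕ) : ℝ)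
          ≤ (Real.exp 1 * (2*m : ℕ) / d)^d := this
        _ = (Real.exp 1 * (2*(m:ℝ)) / d)^d := by push_cast; ring_nf
    have hnum : 2 * S^2 < 2^T :=
      numeric_b d m T S r L hd hr hL hm1 hm2 hTgt hSbound
    -- apply the net existence
    obtain ⟨s, hs⟩ := net_exists Bad m T (S^2) hTm htrace hcheb hnum
    refine ⟨univ.image s, ?_, ?_⟩
    · have hc1 : ((univ.image s).card : ℝ) ≤ (m:ℝ) := by
        have h1 : (univ.image s).card ≤ (univ : Finset (Fin m)).card := card_image_le
        have h2 : (univ : Finset (Fin m)).card = m := by rw [card_univ, Fintype.card_fin]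
        rw [h2] at h1
        exact_mod_cast h1
      have hc2 : (2000:ℝ) * d * r * L + 1 ≤ 100000 * d * r * L := by nlinarith [hdrL]
      linarith
    · intro x x' htr
      have e : symd (x, x') = (univ.filter (fun y => E x y) \ univ.filter (fun y => E x' y))
          ∪ (univ.filter (fun y => E x' y) \ univ.filter (fun y => E x y)) := by
        rw [hsymd, hrow]
      rw [← e]
      by_cases hb : (n:ℝ) < ((symd (x,x')).card : ℝ) * r
      · exfalso
        have hmem : symd (x,x') ∈ Bad := by
          rw [hBad, mem_filter]
          exact ⟨by rw [h𝒮]; exact mem_image.2 ⟨(x,x'), mem_univ _, rfl⟩, hb⟩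
        obtain ⟨i, hi⟩ := hs _ hmem
        have hYh : s i ∈ univ.image s := mem_image.2 ⟨i, mem_univ _, rfl⟩
        have hiff : (s i ∈ univ.filter (fun y => E x y))
            ↔ (s i ∈ univ.filter (fun y => E x' y)) := by
          constructor <;> intro hm
          · have : s i ∈ univ.filter (fun y => E x y) ∩ univ.image s :=
              mem_inter.2 ⟨hm, hYh⟩
            rw [htr] at this
            exact (mem_inter.1 this).1
          · have : s i ∈ univ.filter (fun y => E x' y) ∩ univ.image s :=
              mem_inter.2 ⟨hm, hYh⟩
            rw [← htr] at this
            exact (mem_inter.1 this).1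
        rw [e] at hi
        rw [mem_union, mem_sdiff, mem_sdiff] at hi
        tauto
      · push_neg at hb
        rw [div_le_div_iff₀ hn0' hr0]
        rw [e] at hb
        linarith
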